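/- Suppose $f, f', f'' : \mathbb{R} \to \mathbb{R}$ exist, are bounded and uniformly continuous on $\mathbb{R}$, and $f$ is integrable. Then $u(x,t) := P_t(f)(x) = \frac{1}{2t} \int_{-\infty}^{+\infty} f(x-v)\, e^{-|v|/t}\, dv$ solves the initial value problem $\frac{\partial u}{\partial t}(x,t) = t^2 \frac{\partial^3 u}{\partial x^2 \partial t}(x,t) + 2t \frac{\partial^2 u}{\partial x^2}(x,t)$ for all $t > 0$, $x \in \mathbb{R}$, together with $\lim_{s \searrow 0} u(x,s) = f(x)$ for every $x \in \mathbb{R}$. -/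

import Mathlib

open MeasureTheory Filter

/-- The Picard convolution operator. -/
noncomputable def picardConv (f : ℝ → ℝ) (t x : ℝ) : ℝ :=
  (1 / (2 * t)) * ∫ v : ℝ, f (x - v) * Real.exp (-|v| / t)

namespace PicardAux

open Set Real


lemma ker_integrableOn_Ioi {t : ℝ} (ht : 0 < t) :
    IntegrableOn (fun v : ℝ => Real.exp (-v / t)) (Ioi (0:ℝ)) := by
  refine (exp_neg_integrableOn_Ioi (0:ℝ) (show (0:ℝ) < 1/t by positivity)).congr_fun
    (fun v _ => ?_) measurableSet_Ioi
  congr 1; ring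

lemma ker_integrable {t : ℝ} (ht : 0 < t) :
    Integrable (fun v : ℝ => Real.exp (-|v| / t)) := by
  have h1 : IntegrableOn (fun v : ℝ => Real.exp (-|v| / t)) (Ioi 0) :=
    (ker_integrableOn_Ioi ht).congr_fun (fun v hv => by rw [abs_of_pos hv]) measurableSet_Ioi
  have h2 : IntegrableOn (fun v : ℝ => Real.exp (-|v| / t)) (Iic 0) := by
    have m : MeasurableEmbedding fun x : ℝ => -x :=
      (Homeomorph.neg ℝ).measurableEmbedding
    rw [IntegrableOn, ← Measure.map_neg_eq_self (volume : Measure ℝ),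
      Measure.restrict_map m.measurable (by exact measurableSet_Iic : MeasurableSet (Iic (0:ℝ)))]
    rw [m.integrable_map_iff]
    have : ((fun x : ℝ => -x) ⁻¹' Iic 0) = Ici 0 := by
      ext y; simp [neg_le]
    rw [this]
    refine ((integrableOn_Ici_iff_integrableOn_Ioi).mpr h1).congr_fun (fun v _ => by
      simp [Function.comp, abs_neg]) measurableSet_Ici
  have := h2.union h1
  rwa [Iic_union_Ioi, integrableOn_univ] at this

lemma ker_tendsto_atTop {t : ℝ} (ht : 0 < t) :
    Tendsto (fun v : ℝ => Real.exp (-v / t)) atTop (nhds 0) := by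
  have h2 : Tendsto (fun v : ℝ => -v / t) atTop atBot := by
    simpa [Function.comp_def, neg_div] using
      tendsto_neg_atTop_atBot.comp (tendsto_id.atTop_div_const ht)
  exact Real.tendsto_exp_atBot.comp h2

lemma ker_tendsto_atBot {t : ℝ} (ht : 0 < t) :
    Tendsto (fun v : ℝ => Real.exp (v / t)) atBot (nhds 0) := by
  exact Real.tendsto_exp_atBot.comp (tendsto_id.atBot_div_const ht)

lemma ker_integral {t : ℝ} (ht : 0 < t) :
    ∫ v : ℝ, Real.exp (-|v| / t) = 2 * t := by
  rw [show (fun v : ℝ => Real.exp (-|v| / t)) = (fun v : ℝ => (fun y => Real.exp (-y / t)) |v|)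
    from rfl, integral_comp_abs (f := fun y => Real.exp (-y / t))]
  have : ∫ v in Ioi (0:ℝ), Real.exp (-v / t) = 0 - (-t * Real.exp (-(0:ℝ)/t)) := by
    refine integral_Ioi_of_hasDerivAt_of_tendsto' (f := fun v => -t * Real.exp (-v/t))
      (fun v _ => ?_) (ker_integrableOn_Ioi ht) ?_
    · have hinner : HasDerivAt (fun v : ℝ => -v / t) (-1 / t) v :=
        ((hasDerivAt_id v).neg).div_const t
      have := (hinner.exp).const_mul (-t)
      refine this.congr_deriv ?_
      field_simp
    · have := (ker_tendsto_atTop ht).const_mul (-t)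
      simpa using this
  rw [this]
  simp



lemma hasDerivAt_comp_sub {f : ℝ → ℝ} (hf : Differentiable ℝ f) (x v : ℝ) :
    HasDerivAt (fun v => f (x - v)) (-(deriv f (x - v))) v := by
  have h := ((hf (x - v)).hasDerivAt).comp v ((hasDerivAt_id v).const_sub x)
  simpa [mul_comm, Function.comp_def] using h

lemma conv_integrable {h : ℝ → ℝ} (hc : Continuous h) {M : ℝ} (hM : ∀ y, |h y| ≤ M)
    {t : ℝ} (ht : 0 < t) (x : ℝ) :
    Integrable (fun v : ℝ => h (x - v) * Real.exp (-|v| / t)) :=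
  (ker_integrable ht).bdd_mul
    ((hc.comp (continuous_const.sub continuous_id)).aestronglyMeasurable)
    (c := M) (ae_of_all _ fun v => by simpa [Real.norm_eq_abs] using hM (x - v))

lemma ker_mul_abs_integrable {t : ℝ} (ht : 0 < t) :
    Integrable (fun v : ℝ => |v| * Real.exp (-|v| / t)) := by
  have h2t : (0:ℝ) < 2 * t := by positivity
  refine Integrable.mono ((ker_integrable h2t).const_mul (2*t))
    ((continuous_abs.mul ((continuous_abs.neg.div_const t).rexp)).aestronglyMeasurable)
    (ae_of_all _ fun v => ?_)
  have ha : |v| / (2*t) ≤ Real.exp (|v| / (2*t)) :=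
    (le_add_of_nonneg_right zero_le_one).trans (Real.add_one_le_exp _)
  have key : |v| * Real.exp (-|v| / t) ≤ 2*t * Real.exp (-|v| / (2*t)) := by
    have h1 : |v| ≤ 2*t * Real.exp (|v| / (2*t)) := by
      have := mul_le_mul_of_nonneg_left ha (le_of_lt h2t)
      calc |v| = 2*t * (|v| / (2*t)) := by field_simp
        _ ≤ 2*t * Real.exp (|v| / (2*t)) := this
    calc |v| * Real.exp (-|v| / t) ≤ (2*t * Real.exp (|v| / (2*t))) * Real.exp (-|v| / t) :=
          mul_le_mul_of_nonneg_right h1 (Real.exp_pos _).le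
      _ = 2*t * Real.exp (-|v| / (2*t)) := by
          rw [mul_assoc, ← Real.exp_add]
          congr 2
          field_simp
          ring
  have h1 : ‖|v| * Real.exp (-|v| / t)‖ = |v| * Real.exp (-|v| / t) := by
    rw [Real.norm_eq_abs, abs_of_nonneg (by positivity)]
  have h2 : ‖2*t * Real.exp (-|v| / (2*t))‖ = 2*t * Real.exp (-|v| / (2*t)) := by
    rw [Real.norm_eq_abs, abs_of_nonneg (by positivity)]
  rw [h1, h2]
  exact key

lemma iteratedDeriv_two (g : ℝ → ℝ) : iteratedDeriv 2 g = deriv (deriv g) := by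
  have h2 : (2:ℕ) = 1 + 1 := rfl
  rw [h2, iteratedDeriv_succ, iteratedDeriv_one]

/-- Differentiation in `x` under the integral sign. -/
lemma hasDerivAt_picard_x {h : ℝ → ℝ} (hd : Differentiable ℝ h) (hc' : Continuous (deriv h))
    {M M' : ℝ} (hM : ∀ y, |h y| ≤ M) (hM' : ∀ y, |deriv h y| ≤ M')
    {t : ℝ} (ht : 0 < t) (x : ℝ) :
    HasDerivAt (fun y => picardConv h t y) (picardConv (deriv h) t x) x := by
  unfold picardConv
  apply HasDerivAt.const_mul
  have hc : Continuous h := hd.continuous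
  refine (hasDerivAt_integral_of_dominated_loc_of_deriv_le
    (F := fun y v => h (y - v) * Real.exp (-|v| / t))
    (F' := fun y v => deriv h (y - v) * Real.exp (-|v| / t))
    (bound := fun v => M' * Real.exp (-|v| / t)) (Metric.ball_mem_nhds x one_pos)
    (Eventually.of_forall fun y =>
      ((hc.comp (continuous_const.sub continuous_id)).mul
        ((continuous_abs.neg.div_const t).rexp)).aestronglyMeasurable)
    ?_ ?_ ?_ ?_ ?_).2
  · exact conv_integrable hc hM ht x
  · exact ((hc'.comp (continuous_const.sub continuous_id)).mul
      ((continuous_abs.neg.div_const t).rexp)).aestronglyMeasurable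
  · refine ae_of_all _ fun v y _ => ?_
    rw [Real.norm_eq_abs, abs_mul, abs_of_nonneg (Real.exp_pos _).le]
    exact mul_le_mul_of_nonneg_right (hM' _) (Real.exp_pos _).le
  · exact (ker_integrable ht).const_mul M'
  · refine ae_of_all _ fun v y _ => ?_
    have hin : HasDerivAt (fun y : ℝ => y - v) 1 y := (hasDerivAt_id y).sub_const v
    have := (((hd (y - v)).hasDerivAt).comp y hin).mul_const (Real.exp (-|v| / t))
    simpa using this



lemma div_le_div_of_nonneg_right' {a b c : ℝ} (h : a ≤ b) (hc : 0 < c) : a / c ≤ b / c := by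
  rw [div_le_div_iff₀ hc hc]
  nlinarith

lemma abs_sub_le'' {a b c d : ℝ} (h1 : |a| ≤ c) (h2 : |b| ≤ d) : |a - b| ≤ c + d := by
  rw [sub_eq_add_neg]
  refine (abs_add_le a (-b)).trans ?_
  rw [abs_neg]
  exact add_le_add h1 h2

lemma ker_integrableOn_Iic {t : ℝ} (ht : 0 < t) :
    IntegrableOn (fun v : ℝ => Real.exp (v / t)) (Iic (0:ℝ)) := by
  have m : MeasurableEmbedding fun x : ℝ => -x :=
    (Homeomorph.neg ℝ).measurableEmbedding
  rw [IntegrableOn, ← Measure.map_neg_eq_self (volume : Measure ℝ),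
    Measure.restrict_map m.measurable (by exact measurableSet_Iic : MeasurableSet (Iic (0:ℝ)))]
  rw [m.integrable_map_iff]
  have hpre : ((fun x : ℝ => -x) ⁻¹' Iic 0) = Ici 0 := by
    ext y; simp [neg_le]
  rw [hpre]
  refine ((integrableOn_Ici_iff_integrableOn_Ioi).mpr (ker_integrableOn_Ioi ht)).congr_fun
    (fun v _ => ?_) measurableSet_Ici
  simp [Function.comp, neg_div]

theorem resolvent {f : ℝ → ℝ} (hf : Differentiable ℝ f) (hf' : Differentiable ℝ (deriv f))
    (hc2 : Continuous (deriv (deriv f)))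
    {M0 M1 M2 : ℝ} (hM0 : ∀ y, |f y| ≤ M0) (hM1 : ∀ y, |deriv f y| ≤ M1)
    (hM2 : ∀ y, |deriv (deriv f) y| ≤ M2)
    {t : ℝ} (ht : 0 < t) (x : ℝ) :
    picardConv f t x = f x + t^2 * picardConv (deriv (deriv f)) t x := by
  have hc0 : Continuous f := hf.continuous
  have hc1 : Continuous (deriv f) := hf'.continuous
  have htne : t ≠ 0 := ne_of_gt ht
  set D : ℝ → ℝ := fun v => deriv (deriv f) (x - v) - f (x - v) / t^2 with hD
  have hDcont : Continuous D :=
    (hc2.comp (continuous_const.sub continuous_id)).sub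
      ((hc0.comp (continuous_const.sub continuous_id)).div_const (t^2))
  have hDbdd : ∀ v, |D v| ≤ M2 + M0 / t^2 := by
    intro v
    refine abs_sub_le'' (hM2 _) ?_
    rw [abs_div, abs_of_nonneg (by positivity : (0:ℝ) ≤ t^2)]
    gcongr
    exact hM0 _
  -- the Ioi side
  have hF : ∀ v : ℝ, HasDerivAt
      (fun v => (-(deriv f (x - v)) + f (x - v) / t) * Real.exp (-v / t))
      (D v * Real.exp (-v / t)) v := by
    intro v
    have h1 := (hasDerivAt_comp_sub hf' x v).neg
    have h2 := (hasDerivAt_comp_sub hf x v).div_const t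
    have hker : HasDerivAt (fun v : ℝ => Real.exp (-v / t)) (Real.exp (-v/t) * (-1/t)) v :=
      (((hasDerivAt_id v).neg).div_const t).exp
    have h3 := (h1.add h2).mul hker
    refine h3.congr_deriv ?_
    simp only [hD, Pi.add_apply, Pi.sub_apply, Pi.neg_apply]
    field_simp
    ring
  have hIoiInt : IntegrableOn (fun v => D v * Real.exp (-v / t)) (Ioi 0) := by
    refine (ker_integrableOn_Ioi ht).bdd_mul hDcont.aestronglyMeasurable
      (c := M2 + M0 / t^2) (ae_of_all _ fun v => ?_)
    rw [Real.norm_eq_abs]; exact hDbdd v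
  have hFlim : Tendsto (fun v => (-(deriv f (x - v)) + f (x - v) / t) * Real.exp (-v / t))
      atTop (nhds 0) := by
    apply squeeze_zero_norm (a := fun v => (M1 + M0/t) * Real.exp (-v/t))
    · intro v
      rw [Real.norm_eq_abs, abs_mul, abs_of_nonneg (Real.exp_pos _).le]
      refine mul_le_mul_of_nonneg_right ?_ (Real.exp_pos _).le
      refine (abs_add_le _ _).trans (add_le_add ?_ ?_)
      · rw [abs_neg]; exact hM1 _
      · rw [abs_div, abs_of_nonneg ht.le]
        exact div_le_div_of_nonneg_right' (hM0 _) ht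
    · simpa using (ker_tendsto_atTop ht).const_mul (M1 + M0/t)
  have hIoi := integral_Ioi_of_hasDerivAt_of_tendsto' (fun v _ => hF v) hIoiInt hFlim
  -- the Iic side
  have hH : ∀ v : ℝ, HasDerivAt
      (fun v => (-(deriv f (x - v)) - f (x - v) / t) * Real.exp (v / t))
      (D v * Real.exp (v / t)) v := by
    intro v
    have h1 := (hasDerivAt_comp_sub hf' x v).neg
    have h2 := (hasDerivAt_comp_sub hf x v).div_const t
    have hker : HasDerivAt (fun v : ℝ => Real.exp (v / t)) (Real.exp (v/t) * (1/t)) v :=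
      ((hasDerivAt_id v).div_const t).exp
    have h3 := (h1.sub h2).mul hker
    refine h3.congr_deriv ?_
    simp only [hD, Pi.add_apply, Pi.sub_apply, Pi.neg_apply]
    field_simp
    ring
  have hIicInt : IntegrableOn (fun v => D v * Real.exp (v / t)) (Iic 0) := by
    refine (ker_integrableOn_Iic ht).bdd_mul hDcont.aestronglyMeasurable
      (c := M2 + M0 / t^2) (ae_of_all _ fun v => ?_)
    rw [Real.norm_eq_abs]; exact hDbdd v
  have hHlim : Tendsto (fun v => (-(deriv f (x - v)) - f (x - v) / t) * Real.exp (v / t))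
      atBot (nhds 0) := by
    apply squeeze_zero_norm (a := fun v => (M1 + M0/t) * Real.exp (v/t))
    · intro v
      rw [Real.norm_eq_abs, abs_mul, abs_of_nonneg (Real.exp_pos _).le]
      refine mul_le_mul_of_nonneg_right ?_ (Real.exp_pos _).le
      refine (abs_sub_le'' (a := -(deriv f (x-v))) (b := f (x-v) / t) ?_ ?_)
      · rw [abs_neg]; exact hM1 _
      · rw [abs_div, abs_of_nonneg ht.le]
        exact div_le_div_of_nonneg_right' (hM0 _) ht
    · simpa using (ker_tendsto_atBot ht).const_mul (M1 + M0/t)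
  have hIic := integral_Iic_of_hasDerivAt_of_tendsto' (fun v _ => hH v) hIicInt hHlim
  -- rewrite both set integrals with |v|
  have habs1 : ∫ v in Iic (0:ℝ), D v * Real.exp (-|v| / t) = ∫ v in Iic (0:ℝ), D v * Real.exp (v / t) :=
    setIntegral_congr_fun measurableSet_Iic (fun v hv => by
      rw [abs_of_nonpos (hv : v ≤ 0), neg_neg])
  have habs2 : ∫ v in Ioi (0:ℝ), D v * Real.exp (-|v| / t) = ∫ v in Ioi (0:ℝ), D v * Real.exp (-v / t) :=
    setIntegral_congr_fun measurableSet_Ioi (fun v hv => by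
      rw [abs_of_pos (hv : 0 < v)])
  have hIicInt' : IntegrableOn (fun v => D v * Real.exp (-|v| / t)) (Iic 0) :=
    hIicInt.congr_fun (fun v hv => by rw [abs_of_nonpos (hv : v ≤ 0), neg_neg]) measurableSet_Iic
  have hIoiInt' : IntegrableOn (fun v => D v * Real.exp (-|v| / t)) (Ioi 0) :=
    hIoiInt.congr_fun (fun v hv => by rw [abs_of_pos (hv : 0 < v)]) measurableSet_Ioi
  have hsplit := intervalIntegral.integral_Iic_add_Ioi hIicInt' hIoiInt'
  rw [habs1, habs2, hIic, hIoi] at hsplit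
  simp only [sub_zero, zero_sub, neg_zero, zero_div, Real.exp_zero, mul_one, sub_zero] at hsplit
  -- hsplit : (-(deriv f x) - f x / t) + -(-(deriv f x) + f x / t) = ∫ v, D v * exp (-|v|/t)
  have hint2 : Integrable (fun v : ℝ => deriv (deriv f) (x - v) * Real.exp (-|v| / t)) :=
    conv_integrable hc2 hM2 ht x
  have hint0 : Integrable (fun v : ℝ => f (x - v) * Real.exp (-|v| / t)) :=
    conv_integrable hc0 hM0 ht x
  have hDsplit : ∫ v : ℝ, D v * Real.exp (-|v| / t)
      = (∫ v : ℝ, deriv (deriv f) (x - v) * Real.exp (-|v| / t))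
        - (∫ v : ℝ, f (x - v) * Real.exp (-|v| / t)) / t^2 := by
    rw [← integral_div, ← integral_sub hint2 (hint0.div_const (t^2))]
    refine integral_congr_ae (ae_of_all _ fun v => ?_)
    simp only [hD]
    ring
  rw [hDsplit] at hsplit
  -- now conclude
  simp only [picardConv]
  have goal_eq : (∫ v : ℝ, deriv (deriv f) (x - v) * Real.exp (-|v| / t))
      = (∫ v : ℝ, f (x - v) * Real.exp (-|v| / t)) / t^2 - 2 * f x / t := by
    linear_combination -hsplit
  rw [goal_eq]
  field_simp
  ring



lemma differentiableAt_picard_t {h : ℝ → ℝ} (hc : Continuous h) {M : ℝ} (hM : ∀ y, |h y| ≤ M)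
    {t : ℝ} (ht : 0 < t) (x : ℝ) :
    DifferentiableAt ℝ (fun s => picardConv h s x) t := by
  have hMnn : 0 ≤ M := (abs_nonneg _).trans (hM 0)
  have hI : HasDerivAt (fun s => ∫ v : ℝ, h (x - v) * Real.exp (-|v| / s))
      (∫ v : ℝ, h (x - v) * (Real.exp (-|v| / t) * (|v| / t^2))) t := by
    refine (hasDerivAt_integral_of_dominated_loc_of_deriv_le
      (F := fun s v => h (x - v) * Real.exp (-|v| / s))
      (F' := fun s v => h (x - v) * (Real.exp (-|v| / s) * (|v| / s^2)))
      (bound := fun v => M * ((4 / t^2) * (|v| * Real.exp (-|v| / (2*t)))))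
      (Metric.ball_mem_nhds t (show (0:ℝ) < t/2 by positivity))
      (Eventually.of_forall fun s =>
        ((hc.comp (continuous_const.sub continuous_id)).mul
          ((continuous_abs.neg.div_const s).rexp)).aestronglyMeasurable)
      (conv_integrable hc hM ht x) ?_ ?_ ?_ ?_).2
    · exact ((hc.comp (continuous_const.sub continuous_id)).mul
        (((continuous_abs.neg.div_const t).rexp).mul
          (continuous_abs.div_const (t^2)))).aestronglyMeasurable
    · refine ae_of_all _ fun v s hs => ?_
      rw [Metric.mem_ball, Real.dist_eq, abs_sub_lt_iff] at hs
      have hs1 : t/2 < s := by linarith [hs.2]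
      have hs2 : s < 2*t := by linarith [hs.1]
      have hs0 : 0 < s := lt_trans (by positivity) hs1
      rw [Real.norm_eq_abs, abs_mul, abs_of_nonneg (by positivity : (0:ℝ) ≤ Real.exp (-|v|/s) * (|v|/s^2))]
      refine mul_le_mul (hM _) ?_ (by positivity) hMnn
      have hexp : Real.exp (-|v| / s) ≤ Real.exp (-|v| / (2*t)) := by
        rw [Real.exp_le_exp]
        rw [neg_div, neg_div, neg_le_neg_iff]
        apply div_le_div_of_nonneg_left (abs_nonneg v) hs0 hs2.le
      have hinv : |v| / s^2 ≤ 4 / t^2 * |v| := by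
        rw [div_eq_mul_inv, mul_comm (4 / t^2) |v|]
        refine mul_le_mul_of_nonneg_left ?_ (abs_nonneg v)
        have h1 : (t/2)^2 ≤ s^2 := by nlinarith
        have h2 : (s^2)⁻¹ ≤ ((t/2)^2)⁻¹ := by
          apply inv_anti₀ (by positivity) h1
        refine h2.trans_eq ?_
        field_simp
        ring
      calc Real.exp (-|v| / s) * (|v| / s^2)
          ≤ Real.exp (-|v| / (2*t)) * (4 / t^2 * |v|) :=
            mul_le_mul hexp hinv (by positivity) (Real.exp_pos _).le
        _ = 4 / t^2 * (|v| * Real.exp (-|v| / (2*t))) := by ring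
    · exact ((ker_mul_abs_integrable (show (0:ℝ) < 2*t by positivity)).const_mul
        (4 / t^2)).const_mul M
    · refine ae_of_all _ fun v s hs => ?_
      rw [Metric.mem_ball, Real.dist_eq, abs_sub_lt_iff] at hs
      have hs1 : t/2 < s := by linarith [hs.2]
      have hs0 : s ≠ 0 := ne_of_gt (lt_trans (by positivity) hs1)
      have hinner : HasDerivAt (fun s : ℝ => -|v| / s) (|v| / s^2) s := by
        simp only [div_eq_mul_inv]
        have hh := (hasDerivAt_inv hs0).const_mul (-|v|)
        refine hh.congr_deriv ?_
        ring
      exact (hinner.exp).const_mul (h (x - v))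
  have h1 : DifferentiableAt ℝ (fun s : ℝ => 1 / (2 * s)) t := by
    exact (differentiableAt_const 1).div ((differentiableAt_const 2).mul differentiableAt_id)
      (by positivity)
  simp only [picardConv]
  exact h1.mul hI.differentiableAt



/-- The initial condition. -/
lemma picard_tendsto {f : ℝ → ℝ} (huc : UniformContinuous f)
    {M0 : ℝ} (hM0 : ∀ y, |f y| ≤ M0) (x : ℝ) :
    Tendsto (fun s : ℝ => picardConv f s x) (nhdsWithin 0 (Set.Ioi 0)) (nhds (f x)) := by
  have hc : Continuous f := huc.continuous
  have hM0nn : 0 ≤ M0 := (abs_nonneg _).trans (hM0 0)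
  rw [Metric.tendsto_nhds]
  intro ε hε
  obtain ⟨d, hd, hfd⟩ := Metric.uniformContinuous_iff.mp huc (ε/2) (by positivity)
  -- the exponential tail term tends to 0
  have htail : Tendsto (fun s : ℝ => 4 * M0 * Real.exp (-d / (2*s)))
      (nhdsWithin 0 (Set.Ioi 0)) (nhds 0) := by
    have h1 : Tendsto (fun s : ℝ => -d / (2*s)) (nhdsWithin 0 (Set.Ioi 0)) atBot := by
      have h2 : Tendsto (fun s : ℝ => s⁻¹) (nhdsWithin 0 (Set.Ioi 0)) atTop :=
        tendsto_inv_nhdsGT_zero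
      have h3 := h2.const_mul_atTop (show (0:ℝ) < d/2 by positivity)
      have h4 := tendsto_neg_atTop_atBot.comp h3
      refine h4.congr fun s => ?_
      simp only [Function.comp]
      field_simp
    have := (Real.tendsto_exp_atBot.comp h1).const_mul (4 * M0)
    simpa using this
  have hev1 : ∀ᶠ s in nhdsWithin (0:ℝ) (Set.Ioi 0), 4 * M0 * Real.exp (-d / (2*s)) < ε/2 :=
    htail.eventually_lt_const (by positivity)
  filter_upwards [hev1, self_mem_nhdsWithin] with s hs1 hs2
  have hs : (0:ℝ) < s := hs2
  have h2s : (0:ℝ) < 2*s := by positivity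
  -- key estimate
  have hI1 : Integrable (fun v : ℝ => f (x - v) * Real.exp (-|v| / s)) :=
    conv_integrable hc hM0 hs x
  have hI2 : Integrable (fun v : ℝ => f x * Real.exp (-|v| / s)) :=
    (ker_integrable hs).const_mul (f x)
  have hdiff : picardConv f s x - f x
      = (1 / (2*s)) * ∫ v : ℝ, (f (x - v) - f x) * Real.exp (-|v| / s) := by
    have e1 : ∫ v : ℝ, (f (x - v) - f x) * Real.exp (-|v| / s)
        = (∫ v : ℝ, f (x - v) * Real.exp (-|v| / s)) - f x * (2*s) := by
      have e2 : ∫ v : ℝ, f x * Real.exp (-|v| / s) = f x * (2*s) := by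
        rw [integral_const_mul, ker_integral hs]
      rw [← e2, ← integral_sub hI1 hI2]
      refine integral_congr_ae (ae_of_all _ fun v => ?_)
      ring
    rw [e1, picardConv]
    field_simp
  -- pointwise bound
  set G : ℝ → ℝ := fun v => (ε/2) * Real.exp (-|v| / s)
      + (2 * M0 * Real.exp (-d / (2*s))) * Real.exp (-|v| / (2*s)) with hG
  have hGint : Integrable G :=
    ((ker_integrable hs).const_mul (ε/2)).add
      ((ker_integrable h2s).const_mul (2 * M0 * Real.exp (-d / (2*s))))
  have hptwise : ∀ v : ℝ, ‖(f (x - v) - f x) * Real.exp (-|v| / s)‖ ≤ G v := by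
    intro v
    rw [Real.norm_eq_abs, abs_mul, abs_of_nonneg (Real.exp_pos _).le]
    by_cases hv : |v| < d
    · have h1 : |f (x - v) - f x| ≤ ε/2 := by
        have := hfd (show dist (x - v) x < d by
          rw [Real.dist_eq]; simpa using (abs_neg v ▸ hv : |(-v)| < d))
        rw [Real.dist_eq] at this
        exact this.le
      have h2 : |f (x - v) - f x| * Real.exp (-|v| / s) ≤ (ε/2) * Real.exp (-|v| / s) :=
        mul_le_mul_of_nonneg_right h1 (Real.exp_pos _).le
      refine h2.trans ?_
      simp only [hG]
      have hb : 0 ≤ 2 * M0 * Real.exp (-d / (2*s)) * Real.exp (-|v| / (2*s)) := by positivity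
      linarith
    · push_neg at hv
      have h1 : |f (x - v) - f x| ≤ 2 * M0 := by
        refine (abs_sub _ _).trans ?_
        have := add_le_add (hM0 (x - v)) (hM0 x)
        linarith
      have hsplitexp : Real.exp (-|v| / s)
          ≤ Real.exp (-d / (2*s)) * Real.exp (-|v| / (2*s)) := by
        rw [← Real.exp_add]
        apply Real.exp_le_exp.mpr
        rw [show -d / (2*s) + -|v| / (2*s) = (-d - |v|)/(2*s) by ring]
        rw [div_le_div_iff₀ hs h2s]
        nlinarith
      have h2 : |f (x - v) - f x| * Real.exp (-|v| / s)
          ≤ 2 * M0 * (Real.exp (-d / (2*s)) * Real.exp (-|v| / (2*s))) := by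
        apply mul_le_mul h1 hsplitexp (Real.exp_pos _).le (by positivity)
      refine h2.trans ?_
      simp only [hG]
      have hb : 0 ≤ ε/2 * Real.exp (-|v| / s) := by positivity
      linarith
  have hnormint := norm_integral_le_of_norm_le hGint (ae_of_all _ hptwise)
  have hGval : ∫ v : ℝ, G v = (ε/2) * (2*s) + (2 * M0 * Real.exp (-d / (2*s))) * (2*(2*s)) := by
    simp only [hG]
    rw [integral_add (((ker_integrable hs).const_mul (ε/2)))
      ((ker_integrable h2s).const_mul (2 * M0 * Real.exp (-d / (2*s)))),
      integral_const_mul, integral_const_mul, ker_integral hs, ker_integral h2s]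
  rw [hGval] at hnormint
  rw [Real.dist_eq]
  have habs : |picardConv f s x - f x|
      ≤ (1 / (2*s)) * ((ε/2) * (2*s) + (2 * M0 * Real.exp (-d / (2*s))) * (2*(2*s))) := by
    rw [hdiff, abs_mul, abs_of_nonneg (by positivity : (0:ℝ) ≤ 1/(2*s))]
    refine mul_le_mul_of_nonneg_left ?_ (by positivity)
    exact (Real.norm_eq_abs _ ▸ hnormint)
  have hsimp : (1 / (2*s)) * ((ε/2) * (2*s) + (2 * M0 * Real.exp (-d / (2*s))) * (2*(2*s)))
      = ε/2 + 4 * M0 * Real.exp (-d / (2*s)) := by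
    field_simp
    ring
  rw [hsimp] at habs
  linarith


end PicardAux

open PicardAux

theorem picard_ivp
    (f : ℝ → ℝ)
    (hf_diff : ∀ i < 2, Differentiable ℝ (iteratedDeriv i f))
    (hf_bdd : ∀ i ≤ 2, ∃ M : ℝ, ∀ x : ℝ, |iteratedDeriv i f x| ≤ M)
    (hf_uc : ∀ i ≤ 2, UniformContinuous (iteratedDeriv i f))
    (hf_int : Integrable f) :
    (∀ t > (0 : ℝ), ∀ x : ℝ,
        deriv (fun s => picardConv f s x) t =
          t ^ 2 * deriv (fun s => iteratedDeriv 2 (fun y => picardConv f s y) x) t +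
            2 * t * iteratedDeriv 2 (fun y => picardConv f t y) x) ∧
      (∀ x : ℝ, Tendsto (fun s : ℝ => picardConv f s x)
        (nhdsWithin 0 (Set.Ioi 0)) (nhds (f x))) := by
  -- extract basic facts
  have hd0 : Differentiable ℝ f := by
    have := hf_diff 0 (by norm_num); rwa [iteratedDeriv_zero] at this
  have hd1 : Differentiable ℝ (deriv f) := by
    have := hf_diff 1 (by norm_num); rwa [iteratedDeriv_one] at this
  obtain ⟨M0, hM0⟩ : ∃ M : ℝ, ∀ x : ℝ, |f x| ≤ M := by
    obtain ⟨M, hM⟩ := hf_bdd 0 (by norm_num)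
    exact ⟨M, fun x => by have := hM x; rwa [iteratedDeriv_zero] at this⟩
  obtain ⟨M1, hM1⟩ : ∃ M : ℝ, ∀ x : ℝ, |deriv f x| ≤ M := by
    obtain ⟨M, hM⟩ := hf_bdd 1 (by norm_num)
    exact ⟨M, fun x => by have := hM x; rwa [iteratedDeriv_one] at this⟩
  obtain ⟨M2, hM2⟩ : ∃ M : ℝ, ∀ x : ℝ, |deriv (deriv f) x| ≤ M := by
    obtain ⟨M, hM⟩ := hf_bdd 2 (by norm_num)
    exact ⟨M, fun x => by have := hM x; rwa [iteratedDeriv_two] at this⟩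
  have huc0 : UniformContinuous f := by
    have := hf_uc 0 (by norm_num); rwa [iteratedDeriv_zero] at this
  have hc2 : Continuous (deriv (deriv f)) := by
    have := hf_uc 2 (by norm_num)
    rw [iteratedDeriv_two] at this
    exact this.continuous
  have hc0 : Continuous f := hd0.continuous
  have hc1 : Continuous (deriv f) := hd1.continuous
  -- second x-derivative of the Picard convolution
  have hsecond : ∀ t > (0:ℝ), ∀ x : ℝ,
      iteratedDeriv 2 (fun y => picardConv f t y) x = picardConv (deriv (deriv f)) t x := by
    intro t ht x
    rw [iteratedDeriv_two]
    have hfirst : deriv (fun y => picardConv f t y) = fun y => picardConv (deriv f) t y :=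
      funext fun y => (hasDerivAt_picard_x hd0 hc1 hM0 hM1 ht y).deriv
    rw [hfirst]
    exact (hasDerivAt_picard_x hd1 hc2 hM1 hM2 ht x).deriv
  constructor
  · intro t ht x
    set g : ℝ → ℝ := fun s => picardConv (deriv (deriv f)) s x with hg
    have hg_diff : DifferentiableAt ℝ g t := differentiableAt_picard_t hc2 hM2 ht x
    have hEvent : (fun s => picardConv f s x) =ᶠ[nhds t] (fun s => f x + s^2 * g s) := by
      filter_upwards [Ioi_mem_nhds ht] with s hs
      exact resolvent hd0 hd1 hc2 hM0 hM1 hM2 (hs : (0:ℝ) < s) x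
    have hEvent2 : (fun s => iteratedDeriv 2 (fun y => picardConv f s y) x) =ᶠ[nhds t] g := by
      filter_upwards [Ioi_mem_nhds ht] with s hs
      exact hsecond s (hs : (0:ℝ) < s) x
    have h2 : HasDerivAt (fun s => f x + s^2 * g s)
        (2 * t * g t + t^2 * deriv g t) t := by
      have hp : HasDerivAt (fun s : ℝ => s^2) ((2:ℕ) * t^(2-1)) t := hasDerivAt_pow 2 t
      have := (hp.mul hg_diff.hasDerivAt).const_add (f x)
      refine this.congr_deriv ?_
      push_cast
      ring
    calc deriv (fun s => picardConv f s x) t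
        = deriv (fun s => f x + s^2 * g s) t := hEvent.deriv_eq
      _ = 2 * t * g t + t^2 * deriv g t := h2.deriv
      _ = t ^ 2 * deriv (fun s => iteratedDeriv 2 (fun y => picardConv f s y) x) t +
            2 * t * iteratedDeriv 2 (fun y => picardConv f t y) x := by
          rw [hEvent2.deriv_eq, hsecond t ht x]
          simp only [hg]
          ring
  · intro x
    exact picard_tendsto huc0 hM0 x
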